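/- Let R be a commutative ring with q ∈ R nilpotent and A(R) = R[[x₁,x₂]]/(x₁x₂ − q). If λ ∈ R^* and u ∈ A(R)^* satisfy λ·x₁ = x₁·u and x₂ = x₂·u^{-1} in A(R), then λ = 1 and u = 1. -/

import Mathlib

/-- `A(R) = R[[x₁,x₂]]/(x₁x₂ - q)`. -/
noncomputable abbrev NodeAlg (R : Type*) [CommRing R] (q : R) :=
  MvPowerSeries (Fin 2) R ⧸
    Ideal.span {MvPowerSeries.X (0 : Fin 2) * MvPowerSeries.X 1 - (MvPowerSeries.C q : MvPowerSeries (Fin 2) R)}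

/-- The projection `R[[x₁,x₂]] → A(R)`. -/
noncomputable abbrev nodeMk (R : Type*) [CommRing R] (q : R) :
    MvPowerSeries (Fin 2) R →+* NodeAlg R q :=
  Ideal.Quotient.mk _

namespace NodeAux

open MvPowerSeries Finset

variable {R : Type*} [CommRing R]

noncomputable def dd (a b : ℕ) : Fin 2 →₀ ℕ :=
  Finsupp.single 0 a + Finsupp.single 1 b

@[simp] lemma dd_apply_zero (a b : ℕ) : dd a b 0 = a := by
  simp [dd, Finsupp.single_apply]

@[simp] lemma dd_apply_one (a b : ℕ) : dd a b 1 = b := by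
  simp [dd, Finsupp.single_apply]

lemma dd_self (m : Fin 2 →₀ ℕ) : dd (m 0) (m 1) = m := by
  ext i; fin_cases i <;> simp

lemma dd_inj {a b a' b' : ℕ} : dd a b = dd a' b' ↔ a = a' ∧ b = b' := by
  constructor
  · intro h
    exact ⟨by rw [← dd_apply_zero a b, h, dd_apply_zero],
      by rw [← dd_apply_one a b, h, dd_apply_one]⟩
  · rintro ⟨rfl, rfl⟩; rfl

@[simp] lemma dd_zero : (dd 0 0 : Fin 2 →₀ ℕ) = 0 := by ext i; fin_cases i <;> simp

noncomputable def cc (F : MvPowerSeries (Fin 2) R) (a b : ℕ) : R :=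
  MvPowerSeries.coeff (R := R) (dd a b) F

lemma cc_sub (F G : MvPowerSeries (Fin 2) R) (a b : ℕ) :
    cc (F - G) a b = cc F a b - cc G a b := map_sub _ _ _

lemma X0_eq : (X 0 : MvPowerSeries (Fin 2) R) = monomial (R := R) (dd 1 0) 1 := by
  rw [X_def]; congr 1; simp [dd]

lemma X1_eq : (X 1 : MvPowerSeries (Fin 2) R) = monomial (R := R) (dd 0 1) 1 := by
  rw [X_def]; congr 1; simp [dd]

lemma X01_eq : (X 0 * X 1 : MvPowerSeries (Fin 2) R) = monomial (R := R) (dd 1 1) 1 := by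
  rw [X_def, X_def, monomial_mul_monomial, one_mul]; rfl

lemma dd_le_dd {a b a' b' : ℕ} : dd a b ≤ dd a' b' ↔ a ≤ a' ∧ b ≤ b' := by
  rw [Finsupp.le_def]
  constructor
  · intro h; exact ⟨by simpa using h 0, by simpa using h 1⟩
  · rintro ⟨h1, h2⟩ i; fin_cases i <;> simpa

lemma dd_sub (a b a' b' : ℕ) : dd a b - dd a' b' = dd (a - a') (b - b') := by
  ext i; fin_cases i <;> simp [Finsupp.tsub_apply]

lemma cc_X0_mul (F : MvPowerSeries (Fin 2) R) (a b : ℕ) :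
    cc (X 0 * F) (a + 1) b = cc F a b := by
  unfold cc
  rw [X0_eq, coeff_monomial_mul, if_pos (dd_le_dd.mpr ⟨by omega, by omega⟩), dd_sub, one_mul]
  norm_num

lemma cc_X1_mul (F : MvPowerSeries (Fin 2) R) (a b : ℕ) :
    cc (X 1 * F) a (b + 1) = cc F a b := by
  unfold cc
  rw [X1_eq, coeff_monomial_mul, if_pos (dd_le_dd.mpr ⟨by omega, by omega⟩), dd_sub, one_mul]
  norm_num

lemma cc_X01_mul_succ (K : MvPowerSeries (Fin 2) R) (a b : ℕ) :
    cc (X 0 * X 1 * K) (a + 1) (b + 1) = cc K a b := by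
  unfold cc
  rw [X01_eq, coeff_monomial_mul, if_pos (dd_le_dd.mpr ⟨by omega, by omega⟩), dd_sub, one_mul]
  norm_num

lemma cc_X01_mul_right (K : MvPowerSeries (Fin 2) R) (a : ℕ) :
    cc (X 0 * X 1 * K) a 0 = 0 := by
  unfold cc
  rw [X01_eq, coeff_monomial_mul, if_neg]
  intro h
  have := dd_le_dd.mp h
  omega

lemma cc_X01_mul_left (K : MvPowerSeries (Fin 2) R) (b : ℕ) :
    cc (X 0 * X 1 * K) 0 b = 0 := by
  unfold cc
  rw [X01_eq, coeff_monomial_mul, if_neg]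
  intro h
  have := dd_le_dd.mp h
  omega

lemma cc_C_mul (r : R) (K : MvPowerSeries (Fin 2) R) (a b : ℕ) :
    cc (C (σ := Fin 2) (R := R) r * K) a b = r * cc K a b := by
  unfold cc; rw [coeff_C_mul]

lemma cc_one (a b : ℕ) :
    cc (1 : MvPowerSeries (Fin 2) R) a b = if a = 0 ∧ b = 0 then 1 else 0 := by
  unfold cc
  rw [coeff_one]
  by_cases h : a = 0 ∧ b = 0
  · obtain ⟨rfl, rfl⟩ := h
    simp
  · rw [if_neg h, if_neg]
    intro hz
    rw [← dd_zero] at hz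
    exact h (dd_inj.mp hz)

variable (q : R)

noncomputable def PP : MvPowerSeries (Fin 2) R := X 0 * X 1 - C (σ := Fin 2) (R := R) q

lemma cc_P_mul_succ (K : MvPowerSeries (Fin 2) R) (a b : ℕ) :
    cc (PP q * K) (a + 1) (b + 1) = cc K a b - q * cc K (a + 1) (b + 1) := by
  rw [PP, sub_mul, cc_sub, cc_X01_mul_succ, cc_C_mul]

lemma cc_P_mul_right (K : MvPowerSeries (Fin 2) R) (a : ℕ) :
    cc (PP q * K) a 0 = -(q * cc K a 0) := by
  rw [PP, sub_mul, cc_sub, cc_X01_mul_right, cc_C_mul, zero_sub]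

lemma cc_P_mul_left (K : MvPowerSeries (Fin 2) R) (b : ℕ) :
    cc (PP q * K) 0 b = -(q * cc K 0 b) := by
  rw [PP, sub_mul, cc_sub, cc_X01_mul_left, cc_C_mul, zero_sub]

variable (N : ℕ)

noncomputable def S (F : MvPowerSeries (Fin 2) R) (a : ℕ) : R :=
  ∑ b ∈ range (N + 1), q ^ b * cc F (a + b) b

noncomputable def T (F : MvPowerSeries (Fin 2) R) (b : ℕ) : R :=
  ∑ a ∈ range (N + 1), q ^ a * cc F a (b + a)

lemma S_zero_eq_T_zero (F : MvPowerSeries (Fin 2) R) : S q N F 0 = T q N F 0 := by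
  unfold S T
  refine sum_congr rfl fun i _ => ?_
  norm_num

lemma S_sub (F G : MvPowerSeries (Fin 2) R) (a : ℕ) :
    S q N (F - G) a = S q N F a - S q N G a := by
  unfold S
  rw [← Finset.sum_sub_distrib]
  refine sum_congr rfl fun i _ => ?_
  rw [cc_sub, mul_sub]

lemma T_sub (F G : MvPowerSeries (Fin 2) R) (b : ℕ) :
    T q N (F - G) b = T q N F b - T q N G b := by
  unfold T
  rw [← Finset.sum_sub_distrib]
  refine sum_congr rfl fun i _ => ?_
  rw [cc_sub, mul_sub]

lemma S_P_mul (hN : q ^ (N + 1) = 0) (K : MvPowerSeries (Fin 2) R) (a : ℕ) :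
    S q N (PP q * K) a = 0 := by
  unfold S
  rw [Finset.sum_range_succ']
  have h1 : ∀ i ∈ range N, q ^ (i + 1) * cc (PP q * K) (a + (i + 1)) (i + 1)
      = (fun j => q ^ (j + 1) * cc K (a + j) j) i
        - (fun j => q ^ (j + 1) * cc K (a + j) j) (i + 1) := by
    intro i _
    have : a + (i + 1) = (a + i) + 1 := rfl
    rw [this, cc_P_mul_succ]
    simp only []
    rw [show a + (i + 1) = (a + i) + 1 from rfl]
    ring
  rw [Finset.sum_congr rfl h1, Finset.sum_range_sub']
  simp [cc_P_mul_right, hN]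

lemma T_P_mul (hN : q ^ (N + 1) = 0) (K : MvPowerSeries (Fin 2) R) (b : ℕ) :
    T q N (PP q * K) b = 0 := by
  unfold T
  rw [Finset.sum_range_succ']
  have h1 : ∀ i ∈ range N, q ^ (i + 1) * cc (PP q * K) (i + 1) (b + (i + 1))
      = (fun j => q ^ (j + 1) * cc K j (b + j)) i
        - (fun j => q ^ (j + 1) * cc K j (b + j)) (i + 1) := by
    intro i _
    have : b + (i + 1) = (b + i) + 1 := rfl
    rw [this, cc_P_mul_succ]
    simp only []
    rw [show b + (i + 1) = (b + i) + 1 from rfl]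
    ring
  rw [Finset.sum_congr rfl h1, Finset.sum_range_sub']
  simp [cc_P_mul_left, hN]

lemma S_X0_shift (F : MvPowerSeries (Fin 2) R) (a : ℕ) :
    S q N (X 0 * F) (a + 1) = S q N F a := by
  unfold S
  refine sum_congr rfl fun b _ => ?_
  rw [show a + 1 + b = (a + b) + 1 by omega, cc_X0_mul]

lemma T_X1_shift (F : MvPowerSeries (Fin 2) R) (b : ℕ) :
    T q N (X 1 * F) (b + 1) = T q N F b := by
  unfold T
  refine sum_congr rfl fun a _ => ?_
  rw [show b + 1 + a = (b + a) + 1 by omega, cc_X1_mul]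

lemma cc_CX0 (r : R) (a b : ℕ) :
    cc (C (σ := Fin 2) (R := R) r * X 0) a b = if a = 1 ∧ b = 0 then r else 0 := by
  unfold cc
  rw [X0_eq, ← monomial_zero_eq_C_apply, monomial_mul_monomial, zero_add, mul_one,
    coeff_monomial]
  simp [dd_inj]

lemma S_CX0_one (r : R) : S q N (C (σ := Fin 2) (R := R) r * X 0) 1 = r := by
  unfold S
  have h1 : ∀ b ∈ range (N + 1),
      q ^ b * cc (C (σ := Fin 2) (R := R) r * X 0) (1 + b) b = if b = 0 then r else 0 := by
    intro b _
    rcases b with _ | j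
    · simp [cc_CX0]
    · rw [cc_CX0]
      simp
  rw [Finset.sum_congr rfl h1, Finset.sum_ite_eq' (range (N + 1)) 0 fun _ => r]
  simp

lemma S_CX0_ne (r : R) (a : ℕ) (ha : a ≠ 1) : S q N (C (σ := Fin 2) (R := R) r * X 0) a = 0 := by
  unfold S
  have h1 : ∀ b ∈ range (N + 1),
      q ^ b * cc (C (σ := Fin 2) (R := R) r * X 0) (a + b) b = 0 := by
    intro b _
    rw [cc_CX0, if_neg (by omega), mul_zero]
  rw [Finset.sum_congr rfl h1, Finset.sum_const_zero]

lemma cc_X1' (a b : ℕ) :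
    cc (X 1 : MvPowerSeries (Fin 2) R) a b = if a = 0 ∧ b = 1 then 1 else 0 := by
  unfold cc
  rw [X1_eq, coeff_monomial]
  simp [dd_inj]

lemma T_X1_one : T q N (X 1 : MvPowerSeries (Fin 2) R) 1 = 1 := by
  unfold T
  have h1 : ∀ a ∈ range (N + 1),
      q ^ a * cc (X 1 : MvPowerSeries (Fin 2) R) a (1 + a) = if a = 0 then 1 else 0 := by
    intro a _
    rcases a with _ | j
    · simp [cc_X1']
    · rw [cc_X1']
      simp
  rw [Finset.sum_congr rfl h1, Finset.sum_ite_eq' (range (N + 1)) 0 fun _ => (1 : R)]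
  simp

lemma T_X1_ne (b : ℕ) (hb : b ≠ 1) : T q N (X 1 : MvPowerSeries (Fin 2) R) b = 0 := by
  unfold T
  have h1 : ∀ a ∈ range (N + 1),
      q ^ a * cc (X 1 : MvPowerSeries (Fin 2) R) a (b + a) = 0 := by
    intro a _
    rw [cc_X1', if_neg (by omega), mul_zero]
  rw [Finset.sum_congr rfl h1, Finset.sum_const_zero]

theorem key (hN : q ^ (N + 1) = 0)
    (F K H : MvPowerSeries (Fin 2) R) (lamv : R)
    (hK : X 0 * F - C (σ := Fin 2) (R := R) lamv * X 0 = PP q * K)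
    (hH : X 1 * F - X 1 = PP q * H) :
    lamv = 1 ∧ ∃ G, F - 1 = PP q * G := by
  have e1 : ∀ a, S q N (X 0 * F) a - S q N (C (σ := Fin 2) (R := R) lamv * X 0) a = 0 := fun a => by
    rw [← S_sub, hK, S_P_mul q N hN]
  have e2 : ∀ b, T q N (X 1 * F) b - T q N (X 1 : MvPowerSeries (Fin 2) R) b = 0 := fun b => by
    rw [← T_sub, hH, T_P_mul q N hN]
  have hsh : S q N (X 0 * F) 1 = S q N F 0 := by
    have := S_X0_shift q N F 0
    norm_num at this
    exact this
  have hlam : S q N F 0 = lamv := by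
    have h := e1 1
    rw [hsh, S_CX0_one, sub_eq_zero] at h
    exact h
  have hth : T q N (X 1 * F) 1 = T q N F 0 := by
    have := T_X1_shift q N F 0
    norm_num at this
    exact this
  have hT0 : T q N F 0 = 1 := by
    have h := e2 1
    rw [hth, T_X1_one, sub_eq_zero] at h
    exact h
  have hlam1 : lamv = 1 := by rw [← hlam, S_zero_eq_T_zero, hT0]
  have hS0 : S q N F 0 = 1 := by rw [hlam, hlam1]
  have hS : ∀ a, S q N F (a + 1) = 0 := by
    intro a
    have h := e1 (a + 1 + 1)
    rw [S_X0_shift, S_CX0_ne q N _ _ (by omega), sub_zero] at h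
    exact h
  have hT : ∀ b, T q N F (b + 1) = 0 := by
    intro b
    have h := e2 (b + 1 + 1)
    rw [T_X1_shift, T_X1_ne q N _ (by omega), sub_zero] at h
    exact h
  refine ⟨hlam1, ⟨fun m => ∑ j ∈ range (N + 1), q ^ j * cc F (m 0 + (j + 1)) (m 1 + (j + 1)), ?_⟩⟩
  set G : MvPowerSeries (Fin 2) R :=
    fun m => ∑ j ∈ range (N + 1), q ^ j * cc F (m 0 + (j + 1)) (m 1 + (j + 1)) with hGdef
  have hG : ∀ a b, cc G a b = ∑ j ∈ range (N + 1), q ^ j * cc F (a + (j + 1)) (b + (j + 1)) := by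
    intro a b
    rw [cc, coeff_apply, hGdef]
    simp only [dd_apply_zero, dd_apply_one]
  apply MvPowerSeries.ext
  intro m
  obtain ⟨a, b, rfl⟩ : ∃ a b, m = dd a b := ⟨m 0, m 1, (dd_self m).symm⟩
  change cc (F - 1) a b = cc (PP q * G) a b
  rcases a with _ | a <;> rcases b with _ | b
  · rw [cc_sub, cc_one, if_pos ⟨rfl, rfl⟩, cc_P_mul_right, hG, Finset.mul_sum]
    have h1 : ∀ j ∈ range (N + 1),
        q * (q ^ j * cc F (0 + (j + 1)) (0 + (j + 1))) = q ^ (j + 1) * cc F (j + 1) (j + 1) := by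
      intro j _
      rw [show 0 + (j + 1) = j + 1 by omega]
      ring
    rw [Finset.sum_congr rfl h1, Finset.sum_range_succ, hN, zero_mul, add_zero]
    have h2 := hS0
    rw [S, Finset.sum_range_succ'] at h2
    have h3 : ∀ i ∈ range N,
        q ^ (i + 1) * cc F (0 + (i + 1)) (i + 1) = q ^ (i + 1) * cc F (i + 1) (i + 1) := by
      intro i _
      rw [show 0 + (i + 1) = i + 1 by omega]
    rw [Finset.sum_congr rfl h3] at h2
    norm_num at h2
    linear_combination h2
  · rw [cc_sub, cc_one, if_neg (by omega), sub_zero, cc_P_mul_left, hG, Finset.mul_sum]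
    have h1 : ∀ j ∈ range (N + 1),
        q * (q ^ j * cc F (0 + (j + 1)) (b + 1 + (j + 1)))
          = q ^ (j + 1) * cc F (j + 1) (b + 1 + (j + 1)) := by
      intro j _
      rw [show 0 + (j + 1) = j + 1 by omega]
      ring
    rw [Finset.sum_congr rfl h1, Finset.sum_range_succ, hN, zero_mul, add_zero]
    have h2 := hT b
    rw [T, Finset.sum_range_succ'] at h2
    norm_num at h2
    linear_combination h2
  · rw [cc_sub, cc_one, if_neg (by omega), sub_zero, cc_P_mul_right, hG, Finset.mul_sum]
    have h1 : ∀ j ∈ range (N + 1),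
        q * (q ^ j * cc F (a + 1 + (j + 1)) (0 + (j + 1)))
          = q ^ (j + 1) * cc F (a + 1 + (j + 1)) (j + 1) := by
      intro j _
      rw [show 0 + (j + 1) = j + 1 by omega]
      ring
    rw [Finset.sum_congr rfl h1, Finset.sum_range_succ, hN, zero_mul, add_zero]
    have h2 := hS a
    rw [S, Finset.sum_range_succ'] at h2
    norm_num at h2
    linear_combination h2
  · rw [cc_sub, cc_one, if_neg (by omega), sub_zero, cc_P_mul_succ, hG, hG, Finset.mul_sum]
    have h1 : ∀ j ∈ range (N + 1),
        q * (q ^ j * cc F (a + 1 + (j + 1)) (b + 1 + (j + 1)))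
          = (fun j => q ^ j * cc F (a + (j + 1)) (b + (j + 1))) (j + 1) := by
      intro j _
      simp only []
      rw [show a + 1 + (j + 1) = a + (j + 1 + 1) by omega,
        show b + 1 + (j + 1) = b + (j + 1 + 1) by omega]
      ring
    rw [Finset.sum_congr rfl h1, ← Finset.sum_sub_distrib,
      Finset.sum_range_sub' (fun j => q ^ j * cc F (a + (j + 1)) (b + (j + 1)))]
    rw [hN, zero_mul, sub_zero, pow_zero, one_mul,
      show a + (0 + 1) = a + 1 by omega, show b + (0 + 1) = b + 1 by omega]

end NodeAux

/- If `λ ∈ R^*` and a unit `u ∈ A(R)^*` satisfy `λ·x₁ = x₁·u` and `x₂ = x₂·u⁻¹`,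
then `λ = 1` and `u = 1`. -/
theorem node_scaling_trivial (R : Type*) [CommRing R] (q : R) (hq : IsNilpotent q)
    (lam : Rˣ) (u : (NodeAlg R q)ˣ)
    (h₁ : algebraMap R (NodeAlg R q) (lam : R) * nodeMk R q (MvPowerSeries.X (0 : Fin 2)) =
      nodeMk R q (MvPowerSeries.X (0 : Fin 2)) * u)
    (h₂ : nodeMk R q (MvPowerSeries.X (1 : Fin 2)) =
      nodeMk R q (MvPowerSeries.X (1 : Fin 2)) * ↑u⁻¹) :
    lam = 1 ∧ (u : NodeAlg R q) = 1 := by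
  classical
  obtain ⟨n, hn⟩ := hq
  have hN : q ^ (n + 1) = 0 := by rw [pow_succ, hn, zero_mul]
  obtain ⟨F, hF⟩ := Ideal.Quotient.mk_surjective (u : NodeAlg R q)
  have hC : algebraMap R (NodeAlg R q) (lam : R)
      = nodeMk R q (MvPowerSeries.C (σ := Fin 2) (R := R) (lam : R)) := by
    rw [show MvPowerSeries.C (σ := Fin 2) (R := R) ((lam : R)) = algebraMap R (MvPowerSeries (Fin 2) R) (lam : R)
      from DFunLike.congr_fun MvPowerSeries.c_eq_algebraMap _, Ideal.Quotient.mk_algebraMap]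
  have e1 : nodeMk R q (MvPowerSeries.X 0 * F)
      = nodeMk R q (MvPowerSeries.C (σ := Fin 2) (R := R) (lam : R) * MvPowerSeries.X 0) := by
    rw [map_mul, map_mul, hF, ← h₁, hC]
  obtain ⟨K, hK⟩ := Ideal.mem_span_singleton'.mp (Ideal.Quotient.eq.mp e1)
  have hK' : MvPowerSeries.X 0 * F
      - MvPowerSeries.C (σ := Fin 2) (R := R) (lam : R) * MvPowerSeries.X 0 = NodeAux.PP q * K := by
    rw [NodeAux.PP, ← hK, mul_comm]
  have hx : nodeMk R q (MvPowerSeries.X 1) * (u : NodeAlg R q) = nodeMk R q (MvPowerSeries.X 1) := by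
    conv_lhs => rw [h₂]
    rw [mul_assoc, Units.inv_mul, mul_one]
  have e2 : nodeMk R q (MvPowerSeries.X 1 * F) = nodeMk R q (MvPowerSeries.X 1) := by
    rw [map_mul, hF, hx]
  obtain ⟨H, hH⟩ := Ideal.mem_span_singleton'.mp (Ideal.Quotient.eq.mp e2)
  have hH' : MvPowerSeries.X 1 * F - MvPowerSeries.X 1 = NodeAux.PP q * H := by
    rw [NodeAux.PP, ← hH, mul_comm]
  obtain ⟨hlam1, G, hFG⟩ := NodeAux.key q n hN F K H (lam : R) hK' hH'
  refine ⟨Units.ext hlam1, ?_⟩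
  rw [← hF]
  have : nodeMk R q F = nodeMk R q 1 := by
    rw [Ideal.Quotient.eq]
    refine Ideal.mem_span_singleton'.mpr ⟨G, ?_⟩
    rw [mul_comm, ← NodeAux.PP, ← hFG]
  rw [this, map_one]
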